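/- For a gauge ρ, the relation x < y on ℝ̃_ρ (i.e. x ≤ y and y − x invertible) holds if and only if for all representatives [x_ε] = x and [y_ε] = y one has x_ε < y_ε for ε small and moreover y_ε − x_ε > ρ_ε^m for some m ∈ ℕ and ε small. -/

import Mathlib

open Filter Topology

namespace RC

def F : Filter ℝ := nhdsWithin 0 (Set.Ioi 0)

/-- A gauge: a net `ρ : (0,1] → (0,1]` with `ρ ε → 0` as `ε → 0⁺`. -/
def Gauge (ρ : ℝ → ℝ) : Prop :=
  (∀ ε ∈ Set.Ioc (0:ℝ) 1, ρ ε ∈ Set.Ioc (0:ℝ) 1) ∧ Tendsto ρ F (nhds 0)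

/-- ρ-moderate real nets: `x_ε = O(ρ_ε^{-N})` for some `N`. -/
def Mod (ρ x : ℝ → ℝ) : Prop :=
  ∃ N : ℕ, ∃ C : ℝ, ∀ᶠ ε in F, |x ε| ≤ C * (ρ ε)⁻¹ ^ N

/-- ρ-negligible real nets: `x_ε = O(ρ_ε^{N})` for all `N`. -/
def Ngl (ρ x : ℝ → ℝ) : Prop :=
  ∀ N : ℕ, ∃ C : ℝ, ∀ᶠ ε in F, |x ε| ≤ C * ρ ε ^ N

def Eqv (ρ x y : ℝ → ℝ) : Prop := Ngl ρ (x - y)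

/-- The order on generalized numbers, at the level of representatives. -/
def leG (ρ x y : ℝ → ℝ) : Prop :=
  ∀ x', Mod ρ x' → Eqv ρ x' x → ∃ y', Mod ρ y' ∧ Eqv ρ y' y ∧ ∀ᶠ ε in F, x' ε ≤ y' ε

/-- Invertibility in the quotient ring, at the level of representatives. -/
def InvG (ρ x : ℝ → ℝ) : Prop := ∃ y, Mod ρ y ∧ Eqv ρ (x * y) 1

def ltG (ρ x y : ℝ → ℝ) : Prop := leG ρ x y ∧ InvG ρ (y - x)

def posInv (ρ r : ℝ → ℝ) : Prop := ltG ρ 0 r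

def ModC (ρ : ℝ → ℝ) (x : ℝ → ℂ) : Prop :=
  ∃ N : ℕ, ∃ C : ℝ, ∀ᶠ ε in F, ‖x ε‖ ≤ C * (ρ ε)⁻¹ ^ N

def NglC (ρ : ℝ → ℝ) (x : ℝ → ℂ) : Prop :=
  ∀ N : ℕ, ∃ C : ℝ, ∀ᶠ ε in F, ‖x ε‖ ≤ C * ρ ε ^ N

def EqvC (ρ : ℝ → ℝ) (x y : ℝ → ℂ) : Prop := NglC ρ (x - y)

def InvC (ρ : ℝ → ℝ) (x : ℝ → ℂ) : Prop := ∃ y, ModC ρ y ∧ EqvC ρ (x * y) 1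

noncomputable def absC (x : ℝ → ℂ) : ℝ → ℝ := fun ε => ‖x ε‖

lemma eps_mem : ∀ᶠ ε in F, ε ∈ Set.Ioc (0:ℝ) 1 := by
  have h1 : ∀ᶠ ε in F, ε ∈ Set.Ioi (0:ℝ) := eventually_mem_nhdsWithin
  have h2 : ∀ᶠ ε in F, ε < 1 :=
    (nhdsWithin_le_nhds (Iio_mem_nhds (by norm_num : (0:ℝ) < 1)))
  filter_upwards [h1, h2] with ε h1 h2
  exact ⟨h1, le_of_lt h2⟩

lemma gauge_pos {ρ : ℝ → ℝ} (hρ : Gauge ρ) : ∀ᶠ ε in F, 0 < ρ ε ∧ ρ ε ≤ 1 := by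
  filter_upwards [eps_mem] with ε hε
  exact hρ.1 ε hε

lemma gauge_small {ρ : ℝ → ℝ} (hρ : Gauge ρ) {c : ℝ} (hc : 0 < c) :
    ∀ᶠ ε in F, ρ ε < c := hρ.2.eventually (eventually_lt_nhds hc)

/-- An invertible net is bounded below by some power of ρ. -/
lemma inv_lower {ρ : ℝ → ℝ} (hρ : Gauge ρ) {w : ℝ → ℝ} (hw : InvG ρ w) :
    ∃ m : ℕ, ∀ᶠ ε in F, ρ ε ^ m ≤ |w ε| := by
  obtain ⟨z, ⟨N, C, hC⟩, hinv⟩ := hw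
  obtain ⟨C1, h1⟩ := hinv 1
  set C' : ℝ := max C 1 with hC'def
  have hC'1 : (1:ℝ) ≤ C' := le_max_right _ _
  have hC'pos : (0:ℝ) < C' := lt_of_lt_of_le one_pos hC'1
  set C1' : ℝ := max C1 0 with hC1'def
  have hC1'0 : (0:ℝ) ≤ C1' := le_max_right _ _
  have e1 : (0:ℝ) < 1/(2*(C1'+1)) := by positivity
  have e2 : (0:ℝ) < 1/(2*C') := by positivity
  refine ⟨N + 1, ?_⟩
  filter_upwards [gauge_pos hρ, hC, h1, gauge_small hρ e1, gauge_small hρ e2]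
    with ε hρε hCε h1ε hs1 hs2
  obtain ⟨hρ0, hρ1⟩ := hρε
  have hρN : (0:ℝ) < ρ ε ^ N := pow_pos hρ0 N
  rw [inv_pow] at hCε
  have hzle : |z ε| ≤ C' * (ρ ε ^ N)⁻¹ := by
    have h' : (0:ℝ) ≤ (ρ ε ^ N)⁻¹ := by positivity
    nlinarith [le_max_left C (1:ℝ)]
  rw [pow_one] at h1ε
  have hwz1 : |w ε * z ε - 1| ≤ C1' * ρ ε := by
    have heq : |(w * z - 1) ε| = |w ε * z ε - 1| := by
      simp [Pi.mul_apply, Pi.sub_apply, Pi.one_apply]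
    rw [heq] at h1ε
    have hle : C1 ≤ C1' := le_max_left _ _
    nlinarith [h1ε]
  have hs1' : ρ ε * (2*(C1'+1)) < 1 := (lt_div_iff₀ (by positivity)).mp hs1
  have hsmall : C1' * ρ ε ≤ 1/2 := by nlinarith
  have habs : 1/2 ≤ |w ε| * |z ε| := by
    have h := abs_sub_abs_le_abs_sub (1 : ℝ) (w ε * z ε)
    have h2 : |1 - w ε * z ε| ≤ C1' * ρ ε := by rw [abs_sub_comm]; exact hwz1
    rw [← abs_mul]
    simp only [abs_one] at h
    linarith
  have hwlow : ρ ε ^ N ≤ |w ε| * (2 * C') := by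
    have key : 1/2 ≤ |w ε| * (C' * (ρ ε ^ N)⁻¹) :=
      le_trans habs (mul_le_mul_of_nonneg_left hzle (abs_nonneg _))
    have h3 : ρ ε ^ N * (1/2) ≤ ρ ε ^ N * (|w ε| * (C' * (ρ ε ^ N)⁻¹)) :=
      mul_le_mul_of_nonneg_left key hρN.le
    have h4 : ρ ε ^ N * (ρ ε ^ N)⁻¹ = 1 := mul_inv_cancel₀ (ne_of_gt hρN)
    have h5 : ρ ε ^ N * (|w ε| * (C' * (ρ ε ^ N)⁻¹))
        = |w ε| * C' * (ρ ε ^ N * (ρ ε ^ N)⁻¹) := by ring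
    rw [h5, h4, mul_one] at h3
    have h6 : |w ε| * (2 * C') = 2 * (|w ε| * C') := by ring
    rw [h6]; linarith
  have hρs2 : ρ ε * (2 * C') < 1 := (lt_div_iff₀ (by positivity)).mp hs2
  calc ρ ε ^ (N+1) = ρ ε ^ N * ρ ε := by ring
    _ ≤ (|w ε| * (2*C')) * ρ ε := mul_le_mul_of_nonneg_right hwlow hρ0.le
    _ = |w ε| * (ρ ε * (2*C')) := by ring
    _ ≤ |w ε| * 1 := mul_le_mul_of_nonneg_left hρs2.le (abs_nonneg _)
    _ = |w ε| := mul_one _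

/-- Extract a nonnegative-constant bound at a given order from negligibility. -/
lemma ngl_bound {ρ : ℝ → ℝ} (hρ : Gauge ρ) {a : ℝ → ℝ} (ha : Ngl ρ a) (N : ℕ) :
    ∃ C : ℝ, 0 ≤ C ∧ ∀ᶠ ε in F, |a ε| ≤ C * ρ ε ^ N := by
  obtain ⟨C, hC⟩ := ha N
  refine ⟨max C 0, le_max_right _ _, ?_⟩
  filter_upwards [hC, gauge_pos hρ] with ε hε hρε
  obtain ⟨h0, -⟩ := hρε
  have hN : (0:ℝ) ≤ ρ ε ^ N := by positivity
  nlinarith [le_max_left C (0:ℝ)]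

lemma eqv_refl (ρ z : ℝ → ℝ) : Eqv ρ z z := by
  intro N
  refine ⟨0, ?_⟩
  filter_upwards with ε
  simp [Pi.sub_apply]

/-- `x < y` in `ℝ̃_ρ` iff for all representatives, `x_ε < y_ε` for ε small and moreover
`y_ε − x_ε > ρ_ε^m` for some `m` and ε small. -/
theorem lt_iff_repr (ρ : ℝ → ℝ) (hρ : Gauge ρ)
    (x y : ℝ → ℝ) (hx : Mod ρ x) (hy : Mod ρ y) :
    ltG ρ x y ↔
      ∀ x' y', Mod ρ x' → Mod ρ y' → Eqv ρ x' x → Eqv ρ y' y →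
        (∀ᶠ ε in F, x' ε < y' ε) ∧ ∃ m : ℕ, ∀ᶠ ε in F, ρ ε ^ m < y' ε - x' ε := by
  constructor
  · rintro ⟨hle, hinv⟩ x' y' hx' hy' hex hey
    -- Step 1: |y - x| ≥ ρ^m eventually
    obtain ⟨m, hm⟩ := inv_lower hρ hinv
    -- Step 2: the difference of differences is negligible
    have hd : Ngl ρ (fun ε => (y' ε - x' ε) - (y ε - x ε)) := by
      intro N
      obtain ⟨Ca, hCa⟩ := hex N
      obtain ⟨Cb, hCb⟩ := hey N
      refine ⟨Ca + Cb, ?_⟩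
      filter_upwards [hCa, hCb] with ε ha hb
      simp only [Pi.sub_apply] at ha hb
      rw [abs_le] at ha hb ⊢
      obtain ⟨ha1, ha2⟩ := ha; obtain ⟨hb1, hb2⟩ := hb
      constructor <;> simp only [add_mul] <;> nlinarith
    obtain ⟨C2, hC2pos, hC2⟩ := ngl_bound hρ hd (m+1)
    -- Step 3: |y' - x'| ≥ ρ^(m+2) eventually
    have hM : ∀ᶠ ε in F, ρ ε ^ (m+2) ≤ |y' ε - x' ε| := by
      filter_upwards [hm, hC2, gauge_pos hρ,
        gauge_small hρ (by positivity : (0:ℝ) < 1/(2*(C2+1))),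
        gauge_small hρ (by norm_num : (0:ℝ) < 1/2)] with ε h1 h2 hρε hs1 hs2
      obtain ⟨hρ0, hρ1⟩ := hρε
      have hρm : (0:ℝ) < ρ ε ^ m := pow_pos hρ0 m
      have hs1' : ρ ε * (2*(C2+1)) < 1 := (lt_div_iff₀ (by positivity)).mp hs1
      have hd2 : C2 * ρ ε ^ (m+1) ≤ ρ ε ^ m * (1/2) := by
        have : ρ ε ^ (m+1) = ρ ε ^ m * ρ ε := by ring
        rw [this]
        nlinarith
      have hlow : ρ ε ^ m * (1/2) ≤ |y' ε - x' ε| := by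
        have h1' : ρ ε ^ m ≤ |y ε - x ε| := by simpa [Pi.sub_apply] using h1
        have h3 := abs_sub_abs_le_abs_sub (y ε - x ε) (y' ε - x' ε)
        have h4 : |(y ε - x ε) - (y' ε - x' ε)| = |(y' ε - x' ε) - (y ε - x ε)| :=
          abs_sub_comm _ _
        linarith
      have hq : ρ ε * ρ ε ≤ 1/2 := by nlinarith
      calc ρ ε ^ (m+2) = ρ ε ^ m * (ρ ε * ρ ε) := by ring
        _ ≤ ρ ε ^ m * (1/2) := mul_le_mul_of_nonneg_left hq hρm.le
        _ ≤ |y' ε - x' ε| := hlow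
    -- Step 4: use leG to rule out the negative sign
    obtain ⟨y'', hy''mod, hy''eqv, hxy''⟩ := hle x' hx' hex
    have hd2 : Ngl ρ (fun ε => y' ε - y'' ε) := by
      intro N
      obtain ⟨Ca, hCa⟩ := hey N
      obtain ⟨Cb, hCb⟩ := hy''eqv N
      refine ⟨Ca + Cb, ?_⟩
      filter_upwards [hCa, hCb] with ε ha hb
      simp only [Pi.sub_apply] at ha hb
      rw [abs_le] at ha hb ⊢
      obtain ⟨ha1, ha2⟩ := ha; obtain ⟨hb1, hb2⟩ := hb
      constructor <;> simp only [add_mul] <;> nlinarith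
    obtain ⟨C3, hC3pos, hC3⟩ := ngl_bound hρ hd2 (m+3)
    have hfinal : ∀ᶠ ε in F, ρ ε ^ (m+2) ≤ y' ε - x' ε := by
      filter_upwards [hM, hC3, hxy'', gauge_pos hρ,
        gauge_small hρ (by positivity : (0:ℝ) < 1/(C3+1))] with ε h1 h2 h3 hρε hs
      obtain ⟨hρ0, hρ1⟩ := hρε
      have hρM : (0:ℝ) < ρ ε ^ (m+2) := pow_pos hρ0 _
      have hs' : ρ ε * (C3+1) < 1 := (lt_div_iff₀ (by positivity)).mp hs
      have hneg : -(ρ ε ^ (m+2)) < y' ε - x' ε := by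
        have hlb : y'' ε - x' ε ≥ 0 := by linarith
        have : y' ε - x' ε = (y'' ε - x' ε) + (y' ε - y'' ε) := by ring
        rw [this]
        have h2' : -(C3 * ρ ε ^ (m+3)) ≤ y' ε - y'' ε := (abs_le.mp h2).1
        have : C3 * ρ ε ^ (m+3) < ρ ε ^ (m+2) := by
          have : ρ ε ^ (m+3) = ρ ε ^ (m+2) * ρ ε := by ring
          rw [this]
          nlinarith
        linarith
      rcases abs_cases (y' ε - x' ε) with ⟨he, -⟩ | ⟨he, -⟩ <;> linarith [h1, he]
    have hρlt1 := gauge_small hρ (by norm_num : (0:ℝ) < 1)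
    refine ⟨?_, ⟨m+3, ?_⟩⟩
    · filter_upwards [hfinal, gauge_pos hρ] with ε h1 hρε
      have : (0:ℝ) < ρ ε ^ (m+2) := pow_pos hρε.1 _
      linarith
    · filter_upwards [hfinal, gauge_pos hρ, hρlt1] with ε h1 hρε hlt1
      have hρM : (0:ℝ) < ρ ε ^ (m+2) := pow_pos hρε.1 _
      have : ρ ε ^ (m+3) = ρ ε ^ (m+2) * ρ ε := by ring
      rw [this]
      nlinarith
  · intro h
    constructor
    · intro x' hx' hex
      refine ⟨y, hy, eqv_refl ρ y, ?_⟩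
      exact ((h x' y hx' hy hex (eqv_refl ρ y)).1).mono fun ε hε => le_of_lt hε
    · obtain ⟨hlt, m, hm⟩ := h x y hx hy (eqv_refl ρ x) (eqv_refl ρ y)
      refine ⟨fun ε => ((y - x) ε)⁻¹, ⟨m, 1, ?_⟩, ?_⟩
      · filter_upwards [hm, gauge_pos hρ] with ε hε hρε
        have h1 : (0:ℝ) < ρ ε ^ m := pow_pos hρε.1 m
        have h2 : (0:ℝ) < (y - x) ε := by simp only [Pi.sub_apply]; linarith
        rw [abs_of_pos (inv_pos.mpr h2), one_mul, inv_pow]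
        simp only [Pi.sub_apply]
        exact inv_anti₀ h1 hε.le
      · intro N
        refine ⟨0, ?_⟩
        filter_upwards [hm, gauge_pos hρ] with ε hε hρε
        have h1 : (0:ℝ) < ρ ε ^ m := pow_pos hρε.1 m
        have h2 : y ε - x ε ≠ 0 := ne_of_gt (by linarith)
        have : ((y - x) * (fun ε => ((y - x) ε)⁻¹) - 1) ε = 0 := by
          simp only [Pi.sub_apply, Pi.mul_apply, Pi.one_apply]
          rw [mul_inv_cancel₀ h2]; ring
        rw [this]
        simp

end RC
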